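/- Every finitely generated nilpotent group that is not virtually cyclic admits a surjective homomorphism onto ℤ². -/

import Mathlib

open Subgroup
open scoped DirectSum
open scoped commutatorElement

namespace VCAux


variable {G : Type*} [Group G]

/-- Virtually cyclic. -/
def VC (G : Type*) [Group G] : Prop := ∃ H : Subgroup G, IsCyclic H ∧ H.FiniteIndex

lemma vc_of_finite (G : Type*) [Group G] [Finite G] : VC G :=
  ⟨⊥, inferInstance, ⟨Subgroup.index_ne_zero_of_finite⟩⟩

lemma vc_of_surjective {H : Type*} [Group H] (f : G →* H) (hf : Function.Surjective f)
    (h : VC G) : VC H := by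
  obtain ⟨K, hK, hKi⟩ := h
  refine ⟨K.map f, isCyclic_of_surjective (f.subgroupMap K) (f.subgroupMap_surjective K), ⟨?_⟩⟩
  intro h0
  exact hKi.index_ne_zero (zero_dvd_iff.mp (h0 ▸ Subgroup.index_map_dvd (H := K) hf))

lemma finite_of_finite_ker_range {H : Type*} [Group H] (f : G →* H) (hr : Finite f.range)
    (hk : Finite f.ker) : Finite G := by
  have : Finite (G ⧸ f.ker) := Finite.of_equiv _ (QuotientGroup.quotientKerEquivRange f).symm.toEquiv
  exact Finite.of_equiv _ (Subgroup.groupEquivQuotientProdSubgroup (s := f.ker)).symm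

lemma finite_subgroup_of_le {K L : Subgroup G} (h : K ≤ L) (hL : Finite L) : Finite K :=
  Finite.of_injective (Subgroup.inclusion h) (Subgroup.inclusion_injective h)

lemma vc_of_finite_normal (N : Subgroup G) [N.Normal] (hN : Finite N)
    (h : VC (G ⧸ N)) : VC G := by
  obtain ⟨C, hC, hCi⟩ := h
  obtain ⟨c, hc⟩ := hC.exists_generator
  obtain ⟨g, hg⟩ := QuotientGroup.mk_surjective (c : G ⧸ N)
  set D : Subgroup G := Subgroup.zpowers g with hD
  set Hs : Subgroup G := C.comap (QuotientGroup.mk' N) with hHs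
  have hDH : D ≤ Hs := by
    rw [hD, Subgroup.zpowers_le]
    simp only [hHs, Subgroup.mem_comap, QuotientGroup.mk'_apply, hg]
    exact c.2
  have hHi : Hs.index ≠ 0 := by
    rw [hHs, Subgroup.index_comap_of_surjective _ (QuotientGroup.mk'_surjective N)]
    exact hCi.index_ne_zero
  -- every coset of D in Hs is represented by an element of N
  have hsurj : Function.Surjective
      (fun w : ↥(N.subgroupOf Hs) => (QuotientGroup.mk (w : ↥Hs) : ↥Hs ⧸ D.subgroupOf Hs)) := by
    intro x
    obtain ⟨y, rfl⟩ := QuotientGroup.mk_surjective x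
    have hy : ((y : G) : G ⧸ N) ∈ C := y.2
    obtain ⟨m, hm⟩ := hc ⟨_, hy⟩
    have hm' : ((g ^ m : G) : G ⧸ N) = ((y : G) : G ⧸ N) := by
      have := congrArg (Subtype.val) hm
      simpa [hg] using this
    have h1 : (g ^ m)⁻¹ * (y : G) ∈ N := by
      rw [QuotientGroup.eq] at hm'; exact hm'
    have hw : (y : G) * (g ^ m)⁻¹ ∈ N := by
      have h2 := Subgroup.Normal.conj_mem ‹N.Normal› _ h1 (y : G)
      simpa [mul_assoc] using h2
    have hwH : (y : G) * (g ^ m)⁻¹ ∈ Hs := by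
      exact mul_mem y.2 (inv_mem (hDH (Subgroup.zpow_mem _ (Subgroup.mem_zpowers g) m)))
    refine ⟨⟨⟨(y : G) * (g ^ m)⁻¹, hwH⟩, by simpa [Subgroup.mem_subgroupOf] using hw⟩, ?_⟩
    simp only
    rw [QuotientGroup.eq]
    have : (⟨(y : G) * (g ^ m)⁻¹, hwH⟩ : ↥Hs)⁻¹ * y = ⟨g ^ m, hDH (Subgroup.zpow_mem _ (Subgroup.mem_zpowers g) m)⟩ := by
      ext; simp
    rw [this]
    simpa [Subgroup.mem_subgroupOf, hD] using Subgroup.zpow_mem _ (Subgroup.mem_zpowers g) m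
  have hfin : Finite (↥Hs ⧸ D.subgroupOf Hs) := by
    have : Finite ↥(N.subgroupOf Hs) :=
      Finite.of_injective (fun w => (⟨(w : ↥Hs), w.2⟩ : ↥N))
        (fun a b hab => by
          have h3 : ((a : ↥Hs) : G) = ((b : ↥Hs) : G) := congrArg (Subtype.val : ↥N → G) hab
          exact Subtype.ext (Subtype.ext h3))
    exact Finite.of_surjective _ hsurj
  have hrel : D.relIndex Hs ≠ 0 := Subgroup.index_ne_zero_of_finite
  refine ⟨D, ⟨?_⟩, ⟨?_⟩⟩
  · obtain ⟨⟨x, hx⟩⟩ : Nonempty True := ⟨trivial⟩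
    exact ⟨⟨g, Subgroup.mem_zpowers g⟩, fun y => by
      obtain ⟨m, hm⟩ := Subgroup.mem_zpowers_iff.mp y.2
      exact ⟨m, by ext; simpa using hm⟩⟩
  · intro h0
    have := Subgroup.relIndex_mul_index hDH
    rw [h0, Nat.mul_eq_zero] at this
    rcases this with h | h
    · exact hrel h
    · exact hHi h




/-- Turn an additive hom out of `Additive A` into a multiplicative hom into `Multiplicative B`. -/
def mkMulHom {A B : Type*} [Group A] [AddGroup B] (ψ : Additive A →+ B) :
    A →* Multiplicative B where
  toFun a := Multiplicative.ofAdd (ψ (Additive.ofMul a))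
  map_one' := by simp
  map_mul' a b := by
    have : Additive.ofMul (a * b) = Additive.ofMul a + Additive.ofMul b := rfl
    simp [this]

lemma comm_dichotomy (A : Type*) [CommGroup A] [Group.FG A] :
    (∃ φ : A →* Multiplicative (ℤ × ℤ), Function.Surjective φ) ∨ VC A := by
  classical
  obtain ⟨n, ι, fι, p, hp, e, ⟨eqv⟩⟩ := AddCommGroup.equiv_free_prod_directSum_zmod (Additive A)
  haveI : ∀ i, NeZero (p i ^ e i) := fun i => ⟨pow_ne_zero _ (hp i).pos.ne'⟩
  haveI hT : Finite (⨁ i, ZMod (p i ^ e i)) :=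
    Finite.of_equiv _ (DFinsupp.equivFunOnFintype (ι := ι) (β := fun i => ZMod (p i ^ e i))).symm
  match n, eqv with
  | 0, eqv =>
    right
    haveI : Subsingleton (Fin 0 →₀ ℤ) := ⟨fun a b => Finsupp.ext (fun i => Fin.elim0 i)⟩
    haveI : Finite (Fin 0 →₀ ℤ) := Finite.of_subsingleton
    haveI : Finite (Additive A) := Finite.of_equiv _ eqv.toEquiv.symm
    haveI : Finite A := this
    exact vc_of_finite A
  | 1, eqv =>
    right
    set T := ⨁ i, ZMod (p i ^ e i) with hTdef
    haveI : Finite (Multiplicative T) := hT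
    let χ : A →* Multiplicative T := mkMulHom ((AddMonoidHom.snd _ _).comp eqv.toAddMonoidHom)
    let ρ : A →* Multiplicative ℤ := mkMulHom
      (((Finsupp.applyAddHom (0 : Fin 1)).comp (AddMonoidHom.fst _ _)).comp eqv.toAddMonoidHom)
    have hinj : Function.Injective (ρ.comp χ.ker.subtype) := by
      intro x y hxy
      have hx2 : (eqv (Additive.ofMul ((x : A)))).2 = 0 := x.2
      have hy2 : (eqv (Additive.ofMul ((y : A)))).2 = 0 := y.2
      have h1 : (eqv (Additive.ofMul ((x : A)))).1 0 = (eqv (Additive.ofMul ((y : A)))).1 0 := hxy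
      have heq : eqv (Additive.ofMul ((x : A))) = eqv (Additive.ofMul ((y : A))) := by
        refine Prod.ext ?_ (hx2.trans hy2.symm)
        apply Finsupp.ext
        intro i
        have hi0 : i = (0 : Fin 1) := Subsingleton.elim i 0
        rw [hi0]
        exact h1
      have := eqv.injective heq
      exact Subtype.ext (Additive.ofMul.injective this)
    haveI hc : IsCyclic ↥χ.ker := by
      have h1 : IsCyclic (↥(ρ.comp χ.ker.subtype).range) := Subgroup.isCyclic _
      exact isCyclic_of_surjective (MonoidHom.ofInjective hinj).symm.toMonoidHom
        (MonoidHom.ofInjective hinj).symm.surjective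
    exact ⟨χ.ker, hc, inferInstance⟩
  | (m+2), eqv =>
    left
    let ψ : Additive A →+ ℤ × ℤ :=
      ((Finsupp.applyAddHom (0 : Fin (m+2))).prod (Finsupp.applyAddHom (1 : Fin (m+2)))).comp
        ((AddMonoidHom.fst _ _).comp eqv.toAddMonoidHom)
    refine ⟨mkMulHom ψ, ?_⟩
    intro z
    set a : ℤ := (Multiplicative.toAdd z).1
    set b : ℤ := (Multiplicative.toAdd z).2
    refine ⟨Additive.toMul (eqv.symm (Finsupp.single 0 a + Finsupp.single 1 b, 0)), ?_⟩
    have h01 : (0 : Fin (m+2)) ≠ 1 := by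
      simp [Fin.ext_iff]
    have h10 : (1 : Fin (m+2)) ≠ 0 := h01.symm
    apply Multiplicative.toAdd.injective
    show ψ (eqv.symm (Finsupp.single 0 a + Finsupp.single 1 b, 0)) = Multiplicative.toAdd z
    simp only [ψ, AddMonoidHom.comp_apply, AddMonoidHom.coe_fst, AddEquiv.coe_toAddMonoidHom,
      AddEquiv.apply_symm_apply, AddMonoidHom.prod_apply, Finsupp.applyAddHom_apply,
      Finsupp.add_apply, Finsupp.single_apply]
    simp [h01, h10, a, b]




lemma aux1 {x y g : G} (hz : ⁅y, g⁆ ∈ center G) : ⁅x * y, g⁆ = ⁅x, g⁆ * ⁅y, g⁆ := by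
  have hz' := Subgroup.mem_center_iff.mp hz
  calc ⁅x * y, g⁆ = x * ⁅y, g⁆ * (g * x⁻¹ * g⁻¹) := by
        simp only [commutatorElement_def]; group
    _ = ⁅y, g⁆ * x * (g * x⁻¹ * g⁻¹) := by rw [hz' x]
    _ = ⁅y, g⁆ * ⁅x, g⁆ := by simp only [commutatorElement_def]; group
    _ = ⁅x, g⁆ * ⁅y, g⁆ := (hz' ⁅x, g⁆).symm

lemma aux2 {x g h : G} (hz : ⁅x, h⁆ ∈ center G) : ⁅x, g * h⁆ = ⁅x, g⁆ * ⁅x, h⁆ := by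
  have hz' := Subgroup.mem_center_iff.mp hz
  calc ⁅x, g * h⁆ = x * g * x⁻¹ * (⁅x, h⁆ * g⁻¹) := by
        simp only [commutatorElement_def]; group
    _ = x * g * x⁻¹ * (g⁻¹ * ⁅x, h⁆) := by rw [← hz' g⁻¹]
    _ = ⁅x, g⁆ * ⁅x, h⁆ := by simp only [commutatorElement_def]; group

/-- commutator with fixed right argument, as a hom on a subgroup all of whose
commutators are central -/
def commHomL {N : Subgroup G} (hN : ∀ x ∈ N, ∀ g : G, ⁅x, g⁆ ∈ center G) (g : G) :
    ↥N →* G where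
  toFun x := ⁅(x : G), g⁆
  map_one' := by simp
  map_mul' x y := aux1 (hN _ y.2 g)

/-- commutator with fixed left argument whose commutators are all central, as a hom -/
def commHomR {N : Subgroup G} (hN : ∀ x ∈ N, ∀ g : G, ⁅x, g⁆ ∈ center G) {x : G}
    (hx : x ∈ N) : G →* G where
  toFun g := ⁅x, g⁆
  map_one' := by simp
  map_mul' g h := aux2 (hN _ hx h)

/-- the subgroup of central elements killed by `k` -/
def centralExp (G : Type*) [Group G] (k : ℕ) : Subgroup G where
  carrier := {x | x ∈ center G ∧ x ^ k = 1}
  one_mem' := ⟨Subgroup.one_mem _, one_pow k⟩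
  mul_mem' := by
    rintro a b ⟨ha, ha'⟩ ⟨hb, hb'⟩
    refine ⟨Subgroup.mul_mem _ ha hb, ?_⟩
    rw [Commute.mul_pow ((Subgroup.mem_center_iff.mp ha b).symm), ha', hb', one_mul]
  inv_mem' := by
    rintro a ⟨ha, ha'⟩
    exact ⟨Subgroup.inv_mem _ ha, by rw [inv_pow, ha', inv_one]⟩

lemma finite_subgroup_of_le' {K L : Subgroup G} (h : K ≤ L) (hL : Finite L) : Finite K :=
  Finite.of_injective (Subgroup.inclusion h) (Subgroup.inclusion_injective h)

lemma finite_closure_of_central_torsion {k : ℕ} (hk : k ≠ 0) {T : Set G} (hT : T.Finite)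
    (hsub : T ⊆ (centralExp G k : Set G)) : Finite (Subgroup.closure T) := by
  have hle : Subgroup.closure T ≤ centralExp G k := (Subgroup.closure_le _).mpr hsub
  letI cg : CommGroup ↥(Subgroup.closure T) :=
    { (inferInstance : Group ↥(Subgroup.closure T)) with
      mul_comm := fun a b => Subtype.ext (Subgroup.mem_center_iff.mp (hle b.2).1 (a : G)) }
  haveI : Finite ↥T := hT.to_subtype
  have htor : Monoid.IsTorsion ↥(Subgroup.closure T) := fun x =>
    isOfFinOrder_iff_pow_eq_one.mpr ⟨k, Nat.pos_of_ne_zero hk, Subtype.ext (by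
      have h2 := (hle x.2).2
      push_cast
      exact h2)⟩
  exact @CommGroup.finite_of_fg_torsion _ cg (by exact Group.closure_finite_fg T) (by exact htor)

lemma lcs_map_eq {H : Type*} [Group H] (f : G →* H) (hf : Function.Surjective f) (n : ℕ) :
    Subgroup.map f ((⊤ : Subgroup G).lowerCentralSeries n) = (⊤ : Subgroup H).lowerCentralSeries n := by
  induction n with
  | zero => simpa using Subgroup.map_top_of_surjective f hf
  | succ n ih =>
    show Subgroup.map f ⁅(⊤ : Subgroup G).lowerCentralSeries n, ⊤⁆ = ⁅(⊤ : Subgroup H).lowerCentralSeries n, ⊤⁆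
    rw [Subgroup.map_commutator, ih, Subgroup.map_top_of_surjective f hf]

lemma ab_of_surjective : Function.Surjective (Abelianization.of : G →* Abelianization G) :=
  fun x => QuotientGroup.mk_surjective x

lemma ab_map_surjective {H : Type*} [Group H] (f : G →* H) (hf : Function.Surjective f) :
    Function.Surjective (Abelianization.map f) := by
  intro x
  obtain ⟨h, rfl⟩ := ab_of_surjective (G := H) x
  obtain ⟨g, rfl⟩ := hf h
  exact ⟨Abelianization.of g, Abelianization.lift_apply_of _ _⟩


lemma mem_centralExp_iff {G : Type*} [Group G] {k : ℕ} {x : G} :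
    x ∈ centralExp G k ↔ x ∈ center G ∧ x ^ k = 1 := Iff.rfl

universe u

theorem commutator_finite_of_ab_vc :
    ∀ (c : ℕ) (G : Type u) [Group G] [Group.FG G],
      (⊤ : Subgroup G).lowerCentralSeries c = ⊥ → VC (Abelianization G) → Finite ↥(commutator G) := by
  intro c
  induction c using Nat.strong_induction_on with
  | _ c IH =>
    match c with
    | 0 =>
      intro G _ _ h0 _
      haveI : Subsingleton G :=
        ⟨fun a b => by
          have ha : a ∈ (⊥ : Subgroup G) := h0 ▸ Subgroup.mem_top a
          have hb : b ∈ (⊥ : Subgroup G) := h0 ▸ Subgroup.mem_top b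
          rw [Subgroup.mem_bot] at ha hb
          rw [ha, hb]⟩
      haveI : Finite G := Finite.of_subsingleton
      infer_instance
    | 1 =>
      intro G _ _ h1 _
      have hcb : commutator G = ⊥ := by rw [← Subgroup.top_lowerCentralSeries_one]; exact h1
      rw [hcb]
      infer_instance
    | 2 =>
      -- base case: class ≤ 2, commutators are central and bilinear
      intro G _ _ hbot hab
      have hcent : commutator G ≤ center G := by
        intro x hx
        rw [Subgroup.mem_center_iff]
        intro g
        have h1 : ⁅x, g⁆ ∈ (⊤ : Subgroup G).lowerCentralSeries 2 :=
          Subgroup.commutator_mem_commutator hx (Subgroup.mem_top g)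
        rw [hbot, Subgroup.mem_bot] at h1
        exact ((commutatorElement_eq_one_iff_commute.mp h1).symm).eq
      have hN : ∀ x ∈ (⊤ : Subgroup G), ∀ g : G, ⁅x, g⁆ ∈ center G := fun x _ g =>
        hcent (Subgroup.commutator_mem_commutator (Subgroup.mem_top x) (Subgroup.mem_top g))
      obtain ⟨C, hC, hCi⟩ := hab
      obtain ⟨u, hu⟩ := hC.exists_generator
      obtain ⟨ut, hut⟩ := ab_of_surjective ((u : Abelianization G))
      set k := C.index with hkdef
      have hk : k ≠ 0 := hCi.index_ne_zero
      have hpowk : ∀ a : Abelianization G, ∃ m : ℤ, a ^ k = (u : Abelianization G) ^ m := by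
        intro a
        have h1 : a ^ k ∈ C := C.pow_index_mem a
        obtain ⟨m, hm⟩ := Subgroup.mem_zpowers_iff.mp (hu ⟨a ^ k, h1⟩)
        refine ⟨m, ?_⟩
        have := congrArg (Subtype.val : ↥C → Abelianization G) hm
        simpa using this.symm
      -- every commutator has order dividing k^2
      have hNt : ∀ x : G, x ∈ (⊤ : Subgroup G) := fun x => Subgroup.mem_top x
      have key : ∀ x g : G, ⁅x, g⁆ ^ (k * k) = 1 := by
        intro x g
        have hccent : ∀ w ∈ commutator G, ∀ g' : G, ⁅w, g'⁆ = 1 := by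
          intro w hw g'
          exact commutatorElement_eq_one_iff_commute.mpr
            ((Subgroup.mem_center_iff.mp (hcent hw) g').symm)
        -- reduction modulo the commutator subgroup
        have hred : ∀ a b : G, Abelianization.of a = Abelianization.of b →
            ∀ g' : G, ⁅a, g'⁆ = ⁅b, g'⁆ := by
          intro a b hab' g'
          have hw : b⁻¹ * a ∈ commutator G := by
            have : Abelianization.of (b⁻¹ * a) = 1 := by
              rw [map_mul, map_inv, ← hab', inv_mul_cancel]
            exact (QuotientGroup.eq_one_iff _).mp this
          have := aux1 (x := b) (y := b⁻¹ * a) (g := g') (hN _ (hNt _) g')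
          rw [mul_inv_cancel_left, hccent _ hw g', mul_one] at this
          exact this
        have hred2 : ∀ a b : G, Abelianization.of a = Abelianization.of b →
            ∀ x' : G, ⁅x', a⁆ = ⁅x', b⁆ := by
          intro a b hab' x'
          have hw : b⁻¹ * a ∈ commutator G := by
            have : Abelianization.of (b⁻¹ * a) = 1 := by
              rw [map_mul, map_inv, ← hab', inv_mul_cancel]
            exact (QuotientGroup.eq_one_iff _).mp this
          have hw1 : ⁅x', b⁻¹ * a⁆ = 1 := by
            have h2 : (⁅x', b⁻¹ * a⁆)⁻¹ = 1 := by
              rw [commutatorElement_inv]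
              exact hccent _ hw x'
            exact inv_eq_one.mp h2
          have := aux2 (x := x') (g := b) (h := b⁻¹ * a) (hN _ (hNt _) _)
          rw [mul_inv_cancel_left, hw1, mul_one] at this
          exact this
        set L := commHomL hN g with hLdef
        set R := commHomR hN (hNt ut) with hRdef
        obtain ⟨m, hm⟩ := hpowk (Abelianization.of x)
        obtain ⟨m', hm'⟩ := hpowk (Abelianization.of g)
        have e0 : ⁅x, g⁆ ^ k = ⁅x ^ k, g⁆ := by
          have := map_pow L (⟨x, hNt x⟩ : ↥(⊤ : Subgroup G)) k
          simpa [hLdef, commHomL] using this.symm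
        have hofxk : Abelianization.of (x ^ k) = Abelianization.of (ut ^ m) := by
          rw [map_pow, map_zpow, hut, hm]
        have e1 : ⁅x ^ k, g⁆ = ⁅ut, g⁆ ^ m := by
          rw [hred _ _ hofxk g]
          have := map_zpow L (⟨ut, hNt ut⟩ : ↥(⊤ : Subgroup G)) m
          simpa [hLdef, commHomL] using this
        have e2 : ⁅ut, g⁆ ^ k = 1 := by
          have e2a : ⁅ut, g⁆ ^ k = ⁅ut, g ^ k⁆ := (map_pow R g k).symm
          have hofgk : Abelianization.of (g ^ k) = Abelianization.of (ut ^ m') := by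
            rw [map_pow, map_zpow, hut, hm']
          have e2b : ⁅ut, g ^ k⁆ = ⁅ut, ut ^ m'⁆ := hred2 _ _ hofgk ut
          have e2c : ⁅ut, ut ^ m'⁆ = ⁅ut, ut⁆ ^ m' := by
            simpa [hRdef, commHomR] using map_zpow R ut m' 
          rw [e2a, e2b, e2c, commutatorElement_self, one_zpow]
        calc ⁅x, g⁆ ^ (k * k) = (⁅x, g⁆ ^ k) ^ k := by rw [pow_mul]
          _ = (⁅ut, g⁆ ^ m) ^ k := by rw [e0, e1]
          _ = (⁅ut, g⁆ ^ k) ^ m := by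
              rw [← zpow_natCast (⁅ut, g⁆ ^ m) k, ← zpow_mul, mul_comm m (k : ℤ), zpow_mul,
                zpow_natCast]
          _ = 1 := by rw [e2, one_zpow]
      -- finite generation of the commutator subgroup
      obtain ⟨S, hSclosure, hSfin⟩ := Group.fg_iff.mp ‹Group.FG G›
      set T : Set G := Set.image2 (fun a b => ⁅a, b⁆) S S with hTdef
      have hTfin : T.Finite := Set.Finite.image2 _ hSfin hSfin
      have hTsub : T ⊆ (centralExp G (k * k) : Set G) := by
        rintro t ⟨a, ha, b, hb, rfl⟩
        exact mem_centralExp_iff.mpr ⟨hN a (hNt a) b, key a b⟩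
      have hstep1 : ∀ s ∈ S, ∀ g : G, ⁅s, g⁆ ∈ Subgroup.closure T := by
        intro s hs g
        have hg : g ∈ Subgroup.closure S := by rw [hSclosure]; exact Subgroup.mem_top g
        refine Subgroup.closure_induction (fun t ht => ?_) ?_ (fun g1 g2 _ _ h1 h2 => ?_)
          (fun g1 _ h1 => ?_) hg
        · exact Subgroup.subset_closure (Set.mem_image2_of_mem hs ht)
        · simpa using Subgroup.one_mem (Subgroup.closure T)
        · rw [aux2 (hN s (hNt s) g2)]
          exact Subgroup.mul_mem _ h1 h2
        · have h2 := aux2 (x := s) (g := g1) (h := g1⁻¹) (hN s (hNt s) g1⁻¹)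
          rw [mul_inv_cancel, commutatorElement_one_right] at h2
          have h3 : ⁅s, g1⁻¹⁆ = ⁅s, g1⁆⁻¹ := eq_inv_of_mul_eq_one_right h2.symm
          rw [h3]
          exact Subgroup.inv_mem _ h1
      have hall : ∀ x g : G, ⁅x, g⁆ ∈ Subgroup.closure T := by
        intro x g
        have hx : x ∈ Subgroup.closure S := by rw [hSclosure]; exact Subgroup.mem_top x
        refine Subgroup.closure_induction (fun s hs => hstep1 s hs g) ?_
          (fun x1 x2 _ _ h1 h2 => ?_) (fun x1 _ h1 => ?_) hx
        · simpa using Subgroup.one_mem (Subgroup.closure T)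
        · rw [aux1 (hN x2 (hNt x2) g)]
          exact Subgroup.mul_mem _ h1 h2
        · have h2 := aux1 (x := x1⁻¹) (y := x1) (g := g) (hN x1 (hNt x1) g)
          rw [inv_mul_cancel, commutatorElement_one_left] at h2
          have h3 : ⁅x1⁻¹, g⁆ = ⁅x1, g⁆⁻¹ := eq_inv_of_mul_eq_one_left h2.symm
          rw [h3]
          exact Subgroup.inv_mem _ h1
      have hMT : commutator G ≤ Subgroup.closure T :=
        Subgroup.commutator_le.mpr fun x _ g _ => hall x g
      have hkk : k * k ≠ 0 := Nat.mul_ne_zero hk hk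
      exact finite_subgroup_of_le' hMT (finite_closure_of_central_torsion hkk hTfin hTsub)
    | (m + 3) =>
      intro G _ _ hbot hab
      set M := (⊤ : Subgroup G).lowerCentralSeries (m + 2) with hMdef
      set N := (⊤ : Subgroup G).lowerCentralSeries (m + 1) with hNdef
      have hcent : M ≤ center G := by
        intro x hx
        rw [Subgroup.mem_center_iff]
        intro g
        have h1 : ⁅x, g⁆ ∈ (⊤ : Subgroup G).lowerCentralSeries (m + 3) :=
          Subgroup.commutator_mem_commutator hx (Subgroup.mem_top g)
        rw [hbot, Subgroup.mem_bot] at h1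
        exact ((commutatorElement_eq_one_iff_commute.mp h1).symm).eq
      have hN : ∀ x ∈ N, ∀ g : G, ⁅x, g⁆ ∈ center G := fun x hx g =>
        hcent (Subgroup.commutator_mem_commutator hx (Subgroup.mem_top g))
      set π := QuotientGroup.mk' M with hπdef
      have hπs : Function.Surjective π := QuotientGroup.mk'_surjective M
      haveI : Group.FG (G ⧸ M) := Group.fg_of_surjective hπs
      have hbar : (⊤ : Subgroup (G ⧸ M)).lowerCentralSeries (m + 2) = ⊥ := by
        rw [← lcs_map_eq π hπs (m + 2)]
        rw [Subgroup.map_eq_bot_iff, QuotientGroup.ker_mk']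
      have habbar : VC (Abelianization (G ⧸ M)) :=
        vc_of_surjective (Abelianization.map π) (ab_map_surjective π hπs) hab
      have hfinbar : Finite ↥(commutator (G ⧸ M)) :=
        IH (m + 2) (by omega) (G ⧸ M) hbar habbar
      -- the image of N in G⧸M is finite
      set F := Subgroup.map π N with hFdef
      have hFle : F ≤ commutator (G ⧸ M) := by
        rw [hFdef, hNdef]
        have h1 : (⊤ : Subgroup G).lowerCentralSeries (m + 1) ≤ (⊤ : Subgroup G).lowerCentralSeries 1 :=
          Subgroup.lowerCentralSeries_antitone ⊤ (by omega)
        calc Subgroup.map π ((⊤ : Subgroup G).lowerCentralSeries (m + 1)) ≤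
            Subgroup.map π ((⊤ : Subgroup G).lowerCentralSeries 1) := Subgroup.map_mono h1
          _ = (⊤ : Subgroup (G ⧸ M)).lowerCentralSeries 1 := lcs_map_eq π hπs 1
          _ = commutator (G ⧸ M) := Subgroup.top_lowerCentralSeries_one
      haveI hFfin : Finite ↥F := finite_subgroup_of_le' hFle hfinbar
      set k := Nat.card ↥F with hkdef
      have hk : k ≠ 0 := Nat.card_ne_zero.mpr ⟨⟨1, Subgroup.one_mem F⟩, hFfin⟩
      have hpow : ∀ x ∈ N, x ^ k ∈ M := by
        intro x hx
        have h1 : (⟨π x, Subgroup.mem_map_of_mem π hx⟩ : ↥F) ^ k = 1 := pow_card_eq_one'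
        have h2 : (π x) ^ k = 1 := by
          have := congrArg (Subtype.val : ↥F → G ⧸ M) h1
          simpa using this
        have h3 : π (x ^ k) = 1 := by rw [map_pow]; exact h2
        rwa [← QuotientGroup.ker_mk' M, MonoidHom.mem_ker]
      -- every generator of M is central of order dividing k
      have hMN : M ≤ N := Subgroup.lowerCentralSeries_antitone ⊤ (by omega)
      have key : ∀ x ∈ N, ∀ g : G, ⁅x, g⁆ ∈ centralExp G k := by
        intro x hx g
        refine mem_centralExp_iff.mpr ⟨hN x hx g, ?_⟩
        have h1 := map_pow (commHomL hN g) (⟨x, hx⟩ : ↥N) k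
        have h2 : ⁅x, g⁆ ^ k = ⁅x ^ k, g⁆ := by
          simpa [commHomL] using h1.symm
        rw [h2]
        exact commutatorElement_eq_one_iff_commute.mpr
          ((Subgroup.mem_center_iff.mp (hcent (hpow x hx)) g).symm)
      -- finite set of representatives for N modulo M
      have hrep : ∀ y : ↥F, ∃ x : G, x ∈ N ∧ π x = (y : G ⧸ M) := by
        intro y
        obtain ⟨x, hx, hx'⟩ := Subgroup.mem_map.mp y.2
        exact ⟨x, hx, hx'⟩
      choose rep hrepN hrepπ using hrep
      obtain ⟨S, hSclosure, hSfin⟩ := Group.fg_iff.mp ‹Group.FG G›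
      set T : Set G := Set.image2 (fun a b => ⁅a, b⁆) (Set.range rep) S with hTdef
      have hTfin : T.Finite := Set.Finite.image2 _ (Set.finite_range rep) hSfin
      have hTsub : T ⊆ (centralExp G k : Set G) := by
        rintro t ⟨a, ⟨y, rfl⟩, b, hb, rfl⟩
        exact key _ (hrepN y) b
      have hMT : M ≤ Subgroup.closure T := by
        have : (⊤ : Subgroup G).lowerCentralSeries (m + 2) = ⁅N, ⊤⁆ := rfl
        rw [hMdef, this]
        refine Subgroup.commutator_le.mpr fun x hx g _ => ?_
        set y : ↥F := ⟨π x, Subgroup.mem_map_of_mem π hx⟩ with hydef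
        have hxr : ⁅x, g⁆ = ⁅rep y, g⁆ := by
          have hw : (rep y)⁻¹ * x ∈ M := by
            have hπeq : π (rep y) = π x := hrepπ y
            rw [← QuotientGroup.ker_mk' M, MonoidHom.mem_ker, map_mul, map_inv, hπeq]
            exact inv_mul_cancel _
          have hcomb := aux1 (x := rep y) (y := (rep y)⁻¹ * x) (g := g)
            (hN _ (N.mul_mem (N.inv_mem (hrepN y)) hx) g)
          have hone : ⁅(rep y)⁻¹ * x, g⁆ = 1 := commutatorElement_eq_one_iff_commute.mpr
            ((Subgroup.mem_center_iff.mp (hcent hw) g).symm)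
          rw [mul_inv_cancel_left, hone, mul_one] at hcomb
          exact hcomb
        rw [hxr]
        have hg : g ∈ Subgroup.closure S := by rw [hSclosure]; exact Subgroup.mem_top g
        refine Subgroup.closure_induction (fun t ht => ?_) ?_ (fun g1 g2 _ _ h1 h2 => ?_)
          (fun g1 _ h1 => ?_) hg
        · exact Subgroup.subset_closure (Set.mem_image2_of_mem ⟨y, rfl⟩ ht)
        · simpa using Subgroup.one_mem (Subgroup.closure T)
        · rw [aux2 (hN _ (hrepN y) g2)]
          exact Subgroup.mul_mem _ h1 h2
        · have h2 := aux2 (x := rep y) (g := g1) (h := g1⁻¹) (hN _ (hrepN y) g1⁻¹)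
          rw [mul_inv_cancel, commutatorElement_one_right] at h2
          have h3 : ⁅rep y, g1⁻¹⁆ = ⁅rep y, g1⁆⁻¹ := eq_inv_of_mul_eq_one_right h2.symm
          rw [h3]
          exact Subgroup.inv_mem _ h1
      have hMfin : Finite ↥M :=
        finite_subgroup_of_le' hMT (finite_closure_of_central_torsion hk hTfin hTsub)
      -- conclude: commutator G is (finite M)-by-(finite image)
      set ψ : ↥(commutator G) →* G ⧸ M := π.comp (commutator G).subtype with hψdef
      have hrange : Finite ↥ψ.range := by
        have h1 : ψ.range = Subgroup.map π (commutator G) := by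
          rw [hψdef, MonoidHom.range_comp, Subgroup.range_subtype]
        have h2 : Subgroup.map π (commutator G) = commutator (G ⧸ M) := by
          rw [← Subgroup.top_lowerCentralSeries_one, ← Subgroup.top_lowerCentralSeries_one]
          exact lcs_map_eq π hπs 1
        rw [h1, h2]
        exact hfinbar
      have hker : Finite ↥ψ.ker := by
        refine Finite.of_injective (fun w : ↥ψ.ker => (⟨((w : ↥(commutator G)) : G), ?_⟩ : ↥M))
          ?_
        · have h1 : π ((w : ↥(commutator G)) : G) = 1 := w.2
          exact (QuotientGroup.eq_one_iff _).mp h1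
        · intro a b hab'
          exact Subtype.ext (Subtype.ext (congrArg (Subtype.val : ↥M → G) hab'))
      exact finite_of_finite_ker_range ψ hrange hker


end VCAux

theorem nilpotent_not_virtually_cyclic_surjects_onto_Z2 (G : Type*) [Group G]
    [Group.FG G] [Group.IsNilpotent G]
    (h : ¬ ∃ H : Subgroup G, IsCyclic H ∧ H.FiniteIndex) :
    ∃ φ : G →* Multiplicative (ℤ × ℤ), Function.Surjective φ := by
  classical
  haveI : Group.FG (Abelianization G) := Group.fg_of_surjective VCAux.ab_of_surjective
  rcases VCAux.comm_dichotomy (Abelianization G) with hd | hvc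
  · obtain ⟨φ, hφ⟩ := hd
    exact ⟨φ.comp Abelianization.of, hφ.comp VCAux.ab_of_surjective⟩
  · exfalso
    apply h
    obtain ⟨c, hc⟩ := _root_.nilpotent_iff_lowerCentralSeries.mp ‹Group.IsNilpotent G›
    have hfin : Finite ↥(commutator G) := VCAux.commutator_finite_of_ab_vc c G hc hvc
    have hq : VCAux.VC (G ⧸ commutator G) := hvc
    exact VCAux.vc_of_finite_normal (commutator G) hfin hq
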